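/- Let A be a finite-dimensional unital associative algebra over a field F, and let a₁, …, a_k ∈ A be such that S = {a₁, …, a_k} is a generating system of A and the identity 1_A does not lie in the F-linear span of a₁, …, a_k. Then for any scalars γ₁, …, γ_k ∈ F, the set S₁ = {a₁ + γ₁·1_A, …, a_k + γ_k·1_A} is a generating system of A and ℓ(S₁) = ℓ(S). -/
import Mathlib


open Polynomial Matrix

/-- The `F`-linear span of all words over `S` of length at most `i`
(the empty word being `1`). -/
def wordSpan (F : Type*) {A : Type*} [Field F] [Ring A] [Algebra F A]
    (S : Set A) (i : ℕ) : Submodule F A :=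
  Submodule.span F {x : A | ∃ l : List A, l.length ≤ i ∧ (∀ a ∈ l, a ∈ S) ∧ l.prod = x}

/-- `S` is a generating system of the algebra `A`:
`A` is the union of the subspaces `wordSpan F S i`. -/
def IsGeneratingSystem (F : Type*) {A : Type*} [Field F] [Ring A] [Algebra F A]
    (S : Set A) : Prop :=
  ∀ x : A, ∃ i : ℕ, x ∈ wordSpan F S i

/-- The length of a generating system `S`: the least `k` with `wordSpan F S k = ⊤`. -/
noncomputable def genLength (F : Type*) {A : Type*} [Field F] [Ring A] [Algebra F A]
    (S : Set A) : ℕ :=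
  sInf {k : ℕ | wordSpan F S k = ⊤}

lemma one_mem_wordSpan (F : Type*) {A : Type*} [Field F] [Ring A] [Algebra F A]
    (S : Set A) (i : ℕ) : (1 : A) ∈ wordSpan F S i :=
  Submodule.subset_span ⟨[], by simp⟩

lemma wordSpan_mono (F : Type*) {A : Type*} [Field F] [Ring A] [Algebra F A]
    (S : Set A) {i j : ℕ} (h : i ≤ j) : wordSpan F S i ≤ wordSpan F S j :=
  Submodule.span_mono (fun x hx => by
    obtain ⟨l, hl, hS, hp⟩ := hx
    exact ⟨l, hl.trans h, hS, hp⟩)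

lemma mul_mem_wordSpan (F : Type*) {A : Type*} [Field F] [Ring A] [Algebra F A]
    (S : Set A) {i j : ℕ} {x y : A} (hx : x ∈ wordSpan F S i) (hy : y ∈ wordSpan F S j) :
    x * y ∈ wordSpan F S (i + j) := by
  have h : wordSpan F S i * wordSpan F S j ≤ wordSpan F S (i + j) := by
    rw [wordSpan, wordSpan, Submodule.span_mul_span]
    apply Submodule.span_le.mpr
    rintro z ⟨u, ⟨l₁, hl₁, hS₁, rfl⟩, v, ⟨l₂, hl₂, hS₂, rfl⟩, rfl⟩
    apply Submodule.subset_span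
    refine ⟨l₁ ++ l₂, by simpa using Nat.add_le_add hl₁ hl₂, ?_, by simp⟩
    intro b hb
    rcases List.mem_append.mp hb with h' | h'
    · exact hS₁ b h'
    · exact hS₂ b h'
  exact h (Submodule.mul_mem_mul hx hy)

lemma wordSpan_le_of_subset (F : Type*) {A : Type*} [Field F] [Ring A] [Algebra F A]
    (S T : Set A) (h : T ⊆ ↑(wordSpan F S 1)) (i : ℕ) :
    wordSpan F T i ≤ wordSpan F S i := by
  rw [wordSpan, Submodule.span_le]
  rintro x ⟨l, hl, hT, rfl⟩
  have key : ∀ l : List A, (∀ a ∈ l, a ∈ T) → l.prod ∈ wordSpan F S l.length := by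
    intro l
    induction l with
    | nil => intro _; simpa using one_mem_wordSpan F S 0
    | cons b t ih =>
      intro hmem
      have hb : b ∈ wordSpan F S 1 := h (hmem b (by simp))
      have ht := ih (fun a ha => hmem a (List.mem_cons_of_mem _ ha))
      have := mul_mem_wordSpan F S hb ht
      simpa [List.prod_cons, Nat.add_comm] using this
  exact SetLike.mem_coe.mpr (wordSpan_mono F S hl (key l hT))

theorem genLength_invariant_under_unit_shift
    (F : Type*) [Field F] (A : Type*) [Ring A] [Algebra F A] [FiniteDimensional F A]
    (k : ℕ) (a : Fin k → A)
    (hgen : IsGeneratingSystem F (Set.range a))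
    (h1 : (1 : A) ∉ Submodule.span F (Set.range a))
    (γ : Fin k → F) :
    IsGeneratingSystem F (Set.range fun i => a i + γ i • (1 : A)) ∧
      genLength F (Set.range fun i => a i + γ i • (1 : A)) = genLength F (Set.range a) := by
  set S : Set A := Set.range a with hS
  set T : Set A := Set.range fun i => a i + γ i • (1 : A) with hT
  have hmem : ∀ (U : Set A) (x : A), x ∈ U → x ∈ wordSpan F U 1 := fun U x hx =>
    Submodule.subset_span ⟨[x], by simp, by simpa, by simp⟩
  have hTS : T ⊆ ↑(wordSpan F S 1) := by
    rintro x ⟨i, rfl⟩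
    exact Submodule.add_mem _ (hmem S (a i) ⟨i, rfl⟩)
      (Submodule.smul_mem _ _ (one_mem_wordSpan F S 1))
  have hST : S ⊆ ↑(wordSpan F T 1) := by
    rintro x ⟨i, rfl⟩
    have : a i = (a i + γ i • (1 : A)) + (-γ i) • (1 : A) := by
      simp [neg_smul]
    rw [this]
    exact Submodule.add_mem _ (hmem T _ ⟨i, rfl⟩)
      (Submodule.smul_mem _ _ (one_mem_wordSpan F T 1))
  have key : ∀ i, wordSpan F T i = wordSpan F S i := fun i =>
    le_antisymm (wordSpan_le_of_subset F S T hTS i) (wordSpan_le_of_subset F T S hST i)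
  constructor
  · intro x
    obtain ⟨i, hi⟩ := hgen x
    exact ⟨i, (key i).symm ▸ hi⟩
  · unfold genLength
    congr 1
    ext n
    simp [key n]
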